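/- For a finite set S ⊆ F_2^n with |S| = m, the number F_{2,3} of 2-dimensional affine subspaces of F_2^n containing exactly 3 points of S satisfies F_{2,3} = (m³ − E(S))/6. -/

import Mathlib

def IsFlat (n k : ℕ) (H : Set (Fin n → ZMod 2)) : Prop :=
  ∃ (x : Fin n → ZMod 2) (W : Submodule (ZMod 2) (Fin n → ZMod 2)),
    Module.finrank (ZMod 2) W = k ∧ H = (fun w => x + w) '' (W : Set (Fin n → ZMod 2))

noncomputable def energy (n : ℕ) (S : Set (Fin n → ZMod 2)) : ℕ :=
  {u : (Fin n → ZMod 2) × (Fin n → ZMod 2) × (Fin n → ZMod 2) × (Fin n → ZMod 2) |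
    u.1 ∈ S ∧ u.2.1 ∈ S ∧ u.2.2.1 ∈ S ∧ u.2.2.2 ∈ S ∧
    u.1 + u.2.1 = u.2.2.1 + u.2.2.2}.ncard

section helpers
variable {n : ℕ}

lemma zmod2_cases : ∀ s : ZMod 2, s = 0 ∨ s = 1 := by decide

lemma vadd_self (v : Fin n → ZMod 2) : v + v = 0 := by
  funext i
  have : ∀ x : ZMod 2, x + x = 0 := by decide
  exact this (v i)

lemma add_cancel_left (v w : Fin n → ZMod 2) : v + (v + w) = w := by
  rw [← add_assoc, vadd_self, zero_add]

lemma span_pair_set {a b : Fin n → ZMod 2} :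
    ((Submodule.span (ZMod 2) {a, b} : Submodule (ZMod 2) (Fin n → ZMod 2)) : Set (Fin n → ZMod 2))
      = {0, a, b, a + b} := by
  ext u
  constructor
  · intro hu
    rw [SetLike.mem_coe, Submodule.mem_span_pair] at hu
    obtain ⟨c, d, rfl⟩ := hu
    rcases zmod2_cases c with rfl | rfl <;> rcases zmod2_cases d with rfl | rfl <;>
      simp [Set.mem_insert_iff]
  · intro hu
    rcases hu with rfl | rfl | rfl | rfl
    · exact Submodule.zero_mem _
    · exact Submodule.subset_span (by simp)
    · exact Submodule.subset_span (by simp)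
    · exact Submodule.add_mem _ (Submodule.subset_span (by simp))
        (Submodule.subset_span (by simp))

lemma linindep_pair {a b : Fin n → ZMod 2} (ha : a ≠ 0) (hb : b ≠ 0) (hab : a ≠ b) :
    LinearIndependent (ZMod 2) ![a, b] := by
  rw [LinearIndependent.pair_iff]
  intro s t hst
  rcases zmod2_cases s with rfl | rfl <;> rcases zmod2_cases t with rfl | rfl
  · exact ⟨rfl, rfl⟩
  · simp at hst; exact absurd hst hb
  · simp at hst; exact absurd hst ha
  · exfalso
    simp only [one_smul] at hst
    apply hab
    have := congrArg (fun v => v + b) hst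
    simpa [add_assoc, vadd_self] using this

lemma flat_of_three {x y z : Fin n → ZMod 2} (hxy : x ≠ y) (hxz : x ≠ z) (hyz : y ≠ z) :
    IsFlat n 2 {x, y, z, x + y + z} := by
  refine ⟨x, Submodule.span (ZMod 2) {x + y, x + z}, ?_, ?_⟩
  · have ha : x + y ≠ 0 := fun h => hxy (by have := congrArg (fun v => x + v) h; simpa [add_cancel_left] using this.symm)
    have hb : x + z ≠ 0 := fun h => hxz (by have := congrArg (fun v => x + v) h; simpa [add_cancel_left] using this.symm)
    have hab : x + y ≠ x + z := fun h => hyz (by have := congrArg (fun v => x + v) h; simpa [add_cancel_left] using this)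
    have hli := linindep_pair ha hb hab
    have := finrank_span_eq_card hli
    rw [show Set.range ![x + y, x + z] = {x + y, x + z} by
      simp [Matrix.range_cons, Matrix.range_empty, Set.insert_union, Set.pair_comm (x+z) (x+y)]] at this
    simpa using this
  · rw [span_pair_set]
    simp only [Set.image_insert_eq, Set.image_singleton]
    have h1 : x + 0 = x := by rw [add_zero]
    have h2 : x + (x + y) = y := add_cancel_left _ _
    have h3 : x + (x + z) = z := add_cancel_left _ _
    have h4 : x + (x + y + (x + z)) = x + y + z := by
      rw [show x + y + (x + z) = x + (x + (y + z)) by abel, add_cancel_left, ← add_assoc]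
    rw [h1, h2, h3, h4]

lemma char2_eq_of_add_eq_zero {a b : Fin n → ZMod 2} (h : a + b = 0) : a = b := by
  have := congrArg (fun v => v + b) h
  simpa [add_assoc, vadd_self] using this

lemma flat_structure {H : Set (Fin n → ZMod 2)} (hH : IsFlat n 2 H) :
    ∃ p q r s : Fin n → ZMod 2, p ≠ q ∧ p ≠ r ∧ p ≠ s ∧ q ≠ r ∧ q ≠ s ∧ r ≠ s ∧
      s = p + q + r ∧ H = {p, q, r, s} := by
  obtain ⟨x, W, hrank, rfl⟩ := hH
  have : Module.Finite (ZMod 2) W := Module.Finite.of_finite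
  let b : Module.Basis (Fin 2) (ZMod 2) W := Module.finBasisOfFinrankEq (ZMod 2) W hrank
  set a : Fin n → ZMod 2 := ((b 0 : W) : Fin n → ZMod 2) with hA
  set c : Fin n → ZMod 2 := ((b 1 : W) : Fin n → ZMod 2) with hC
  have ha0 : a ≠ 0 := fun h => b.ne_zero 0 (Subtype.ext h)
  have hc0 : c ≠ 0 := fun h => b.ne_zero 1 (Subtype.ext h)
  have hac : a ≠ c := fun h =>
    (by decide : (0 : Fin 2) ≠ 1) (b.injective (Subtype.ext h))
  have hWset : (W : Set (Fin n → ZMod 2)) = {0, a, c, a + c} := by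
    ext u
    constructor
    · intro hu
      have hmem : (⟨u, hu⟩ : W) ∈ Submodule.span (ZMod 2) {b 0, b 1} := by
        have hsp : Submodule.span (ZMod 2) (Set.range b) = ⊤ := b.span_eq
        rw [show Set.range b = {b 0, b 1} by
          ext w; simp [Set.range, Fin.exists_fin_two, eq_comm]] at hsp
        rw [hsp]; trivial
      rw [Submodule.mem_span_pair] at hmem
      obtain ⟨s, t, hst⟩ := hmem
      have hv := congrArg (Subtype.val) hst
      rcases zmod2_cases s with rfl | rfl <;> rcases zmod2_cases t with rfl | rfl
      · left; simpa using hv.symm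
      · right; right; left; rw [hC]; simpa using hv.symm
      · right; left; rw [hA]; simpa using hv.symm
      · right; right; right
        rw [Set.mem_singleton_iff, hA, hC]; simpa using hv.symm
    · intro hu
      rcases hu with rfl | rfl | rfl | rfl
      · exact W.zero_mem
      · exact (b 0).2
      · exact (b 1).2
      · exact W.add_mem (b 0).2 (b 1).2
  have key : ∀ u v : Fin n → ZMod 2, x + u = x + v → u = v := fun u v h => by
    have := congrArg (fun w => x + w) h
    simpa [add_cancel_left] using this
  refine ⟨x, x + a, x + c, x + a + c, ?_, ?_, ?_, ?_, ?_, ?_, ?_, ?_⟩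
  · intro h
    exact ha0 (key 0 a (by rw [add_zero]; exact h)).symm
  · intro h
    exact hc0 (key 0 c (by rw [add_zero]; exact h)).symm
  · intro h
    have h2 : (0 : Fin n → ZMod 2) = a + c :=
      key 0 (a + c) (by rw [add_zero, ← add_assoc]; exact h)
    exact hac (char2_eq_of_add_eq_zero h2.symm)
  · intro h
    exact hac (key a c h)
  · intro h
    have h2 : a = a + c := key a (a + c) (by rw [add_assoc] at h; exact h)
    have h3 : (0 : Fin n → ZMod 2) = c := add_left_cancel (by rw [add_zero]; exact h2)
    exact hc0 h3.symm
  · intro h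
    have h2 : c = a + c := key c (a + c) (by rw [add_assoc] at h; exact h)
    have h3 : a = 0 := add_right_cancel (b := c) (by rw [zero_add]; exact h2.symm)
    exact ha0 h3
  · rw [show x + (x + a) + (x + c) = x + a + c + (x + x) by abel, vadd_self, add_zero]
  · rw [hWset]
    simp only [Set.image_insert_eq, Set.image_singleton, add_zero, ← add_assoc]

lemma ncard_four {a b c d : Fin n → ZMod 2} (hab : a ≠ b) (hac : a ≠ c) (had : a ≠ d)
    (hbc : b ≠ c) (hbd : b ≠ d) (hcd : c ≠ d) :
    ({a, b, c, d} : Set (Fin n → ZMod 2)).ncard = 4 := by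
  rw [Set.ncard_insert_of_notMem (by simp [hab, hac, had]) (Set.toFinite _),
      Set.ncard_insert_of_notMem (by simp [hbc, hbd]) (Set.toFinite _),
      Set.ncard_pair hcd]

lemma flat_sum_mem {k : ℕ} {H : Set (Fin n → ZMod 2)} (hH : IsFlat n k H)
    {u v w : Fin n → ZMod 2} (hu : u ∈ H) (hv : v ∈ H) (hw : w ∈ H) : u + v + w ∈ H := by
  obtain ⟨x, W, -, rfl⟩ := hH
  obtain ⟨wu, hwu, rfl⟩ := hu
  obtain ⟨wv, hwv, rfl⟩ := hv
  obtain ⟨ww, hww, rfl⟩ := hw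
  refine ⟨wu + wv + ww, W.add_mem (W.add_mem hwu hwv) hww, ?_⟩
  show x + (wu + wv + ww) = (x + wu) + (x + wv) + (x + ww)
  rw [show (x + wu) + (x + wv) + (x + ww) = x + (wu + wv + ww) + (x + x) by abel,
    vadd_self, add_zero]

lemma flat_decomp {S H : Set (Fin n → ZMod 2)} (hH : IsFlat n 2 H)
    (h3 : (H ∩ S).ncard = 3) :
    ∃ a b c : Fin n → ZMod 2, a ≠ b ∧ a ≠ c ∧ b ≠ c ∧ H ∩ S = {a, b, c} ∧
      a + b + c ∉ S ∧ H = {a, b, c, a + b + c} := by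
  obtain ⟨a, b, c, hab, hac, hbc, hABC⟩ := Set.ncard_eq_three.mp h3
  have ha : a ∈ H ∩ S := by rw [hABC]; simp
  have hb : b ∈ H ∩ S := by rw [hABC]; simp
  have hc : c ∈ H ∩ S := by rw [hABC]; simp
  set d := a + b + c with hd
  have hdH : d ∈ H := flat_sum_mem hH ha.1 hb.1 hc.1
  have hda : d ≠ a := by
    intro h
    have : a + (b + c) = a + 0 := by rw [add_zero, ← add_assoc]; exact h
    exact hbc (char2_eq_of_add_eq_zero (add_left_cancel this))
  have hdb : d ≠ b := by
    intro h
    have : b + (a + c) = b + 0 := by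
      rw [add_zero, show b + (a + c) = a + b + c by abel]; exact h
    exact hac (char2_eq_of_add_eq_zero (add_left_cancel this))
  have hdc : d ≠ c := by
    intro h
    have : c + (a + b) = c + 0 := by
      rw [add_zero, show c + (a + b) = a + b + c by abel]; exact h
    exact hab (char2_eq_of_add_eq_zero (add_left_cancel this))
  have hdS : d ∉ S := by
    intro h
    have : d ∈ ({a, b, c} : Set (Fin n → ZMod 2)) := by rw [← hABC]; exact ⟨hdH, h⟩
    rcases this with h' | h' | h'
    · exact hda h'
    · exact hdb h'
    · exact hdc h'
  refine ⟨a, b, c, hab, hac, hbc, hABC, hdS, ?_⟩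
  obtain ⟨p, q, r, s, hpq, hpr, hps, hqr, hqs, hrs, -, hPQRS⟩ := flat_structure hH
  have hHcard : H.ncard = 4 := by
    rw [hPQRS]; exact ncard_four hpq hpr hps hqr hqs hrs
  refine (Set.eq_of_subset_of_ncard_le ?_ ?_ (Set.toFinite _)).symm
  · intro u hu
    rcases hu with rfl | rfl | rfl | rfl
    · exact ha.1
    · exact hb.1
    · exact hc.1
    · exact hdH
  · rw [hHcard, ncard_four hab hac (Ne.symm hda) hbc (Ne.symm hdb) (Ne.symm hdc)]

lemma char2_iff (a b c d : Fin n → ZMod 2) : a + b = c + d ↔ a + b + c = d := by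
  constructor
  · intro h
    rw [h, show c + d + c = d + (c + c) by abel, vadd_self, add_zero]
  · intro h
    rw [← h, show c + (a + b + c) = a + b + (c + c) by abel, vadd_self, add_zero]

end helpers

set_option maxHeartbeats 1600000 in
theorem stmt_13 (n m : ℕ) (S : Set (Fin n → ZMod 2)) (hm : S.ncard = m) :
    (({H : Set (Fin n → ZMod 2) | IsFlat n 2 H ∧ (H ∩ S).ncard = 3}.ncard : ℤ)) * 6 =
      (m : ℤ) ^ 3 - (energy n S : ℤ) := by
  classical
  set T : Set ((Fin n → ZMod 2) × (Fin n → ZMod 2) × (Fin n → ZMod 2)) :=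
    {t | t.1 ∈ S ∧ t.2.1 ∈ S ∧ t.2.2 ∈ S ∧ t.1 + t.2.1 + t.2.2 ∈ S} with hT
  set T' : Set ((Fin n → ZMod 2) × (Fin n → ZMod 2) × (Fin n → ZMod 2)) :=
    {t | t.1 ∈ S ∧ t.2.1 ∈ S ∧ t.2.2 ∈ S ∧ t.1 + t.2.1 + t.2.2 ∉ S} with hT'
  set F : Set (Set (Fin n → ZMod 2)) := {H | IsFlat n 2 H ∧ (H ∩ S).ncard = 3} with hF
  -- Step 1 : energy = T.ncard
  have hstep1 : energy n S = T.ncard := by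
    have himg : {u : (Fin n → ZMod 2) × (Fin n → ZMod 2) × (Fin n → ZMod 2) × (Fin n → ZMod 2) |
        u.1 ∈ S ∧ u.2.1 ∈ S ∧ u.2.2.1 ∈ S ∧ u.2.2.2 ∈ S ∧
        u.1 + u.2.1 = u.2.2.1 + u.2.2.2} =
        (fun t : (Fin n → ZMod 2) × (Fin n → ZMod 2) × (Fin n → ZMod 2) =>
          (t.1, t.2.1, t.2.2, t.1 + t.2.1 + t.2.2)) '' T := by
      ext ⟨u1, u2, u3, u4⟩
      constructor
      · rintro ⟨h1, h2, h3, h4, h5⟩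
        have h6 : u1 + u2 + u3 = u4 := (char2_iff u1 u2 u3 u4).mp h5
        exact ⟨(u1, u2, u3), ⟨h1, h2, h3, by rw [h6]; exact h4⟩, by simp [h6]⟩
      · rintro ⟨⟨t1, t2, t3⟩, ⟨h1, h2, h3, h4⟩, heq⟩
        obtain ⟨e1, e2, e3, e4⟩ : t1 = u1 ∧ t2 = u2 ∧ t3 = u3 ∧ t1 + t2 + t3 = u4 := by
          simpa [Prod.ext_iff] using heq
        subst e1; subst e2; subst e3; subst e4
        exact ⟨h1, h2, h3, h4, (char2_iff _ _ _ _).mpr rfl⟩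
    rw [energy, himg]
    exact Set.ncard_image_of_injective T (by
      rintro ⟨a1, a2, a3⟩ ⟨b1, b2, b3⟩ h
      simp only [Prod.ext_iff] at h
      simp [Prod.ext_iff, h.1, h.2.1, h.2.2.1])
  -- Step 2 : T.ncard + T'.ncard = m ^ 3
  have hstep2 : T.ncard + T'.ncard = m ^ 3 := by
    have hunion : T ∪ T' = S ×ˢ S ×ˢ S := by
      ext ⟨t1, t2, t3⟩
      simp only [hT, hT', Set.mem_union, Set.mem_setOf_eq, Set.mem_prod]
      tauto
    have hdisj : Disjoint T T' := by
      rw [Set.disjoint_left]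
      rintro t ⟨-, -, -, h4⟩ ⟨-, -, -, h4'⟩
      exact h4' h4
    have hprod : (S ×ˢ S ×ˢ S).ncard = m ^ 3 := by
      have e1 : Nat.card (S ×ˢ S ×ˢ S : Set _) = Nat.card S * (Nat.card S * Nat.card S) := by
        rw [Nat.card_congr (Equiv.Set.prod S (S ×ˢ S)), Nat.card_prod,
          Nat.card_congr (Equiv.Set.prod S S), Nat.card_prod]
      rw [← Nat.card_coe_set_eq, e1, Nat.card_coe_set_eq, hm]
      ring
    rw [← Set.ncard_union_eq hdisj (Set.toFinite _) (Set.toFinite _), hunion, hprod]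
  -- Step 3 : T'.ncard = 6 * F.ncard
  have hstep3 : T'.ncard = 6 * F.ncard := by
    set g : (Fin n → ZMod 2) × (Fin n → ZMod 2) × (Fin n → ZMod 2) → Set (Fin n → ZMod 2) :=
      fun t => {t.1, t.2.1, t.2.2, t.1 + t.2.1 + t.2.2} with hg
    set A := (Set.toFinite T').toFinset with hA
    set B := (Set.toFinite F).toFinset with hB
    have hdist : ∀ t ∈ T', t.1 ≠ t.2.1 ∧ t.1 ≠ t.2.2 ∧ t.2.1 ≠ t.2.2 := by
      rintro ⟨t1, t2, t3⟩ ⟨h1, h2, h3, h4⟩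
      dsimp only at h1 h2 h3 h4 ⊢
      refine ⟨?_, ?_, ?_⟩
      · rintro rfl
        exact h4 (by rw [show t1 + t1 + t3 = t3 + (t1 + t1) by abel, vadd_self, add_zero]; exact h3)
      · rintro rfl
        exact h4 (by rw [show t1 + t2 + t1 = t2 + (t1 + t1) by abel, vadd_self, add_zero]; exact h2)
      · rintro rfl
        exact h4 (by rw [show t1 + t2 + t2 = t1 + (t2 + t2) by abel, vadd_self, add_zero]; exact h1)
    have hmaps : ∀ t ∈ A, g t ∈ B := by
      intro t ht
      rw [hA, Set.Finite.mem_toFinset] at ht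
      obtain ⟨h12, h13, h23⟩ := hdist t ht
      obtain ⟨h1, h2, h3, h4⟩ := ht
      rw [hB, Set.Finite.mem_toFinset]
      refine ⟨flat_of_three h12 h13 h23, ?_⟩
      have hint : g t ∩ S = {t.1, t.2.1, t.2.2} := by
        ext u
        simp only [hg, Set.mem_inter_iff, Set.mem_insert_iff, Set.mem_singleton_iff]
        constructor
        · rintro ⟨(rfl | rfl | rfl | rfl), huS⟩
          · exact Or.inl rfl
          · exact Or.inr (Or.inl rfl)
          · exact Or.inr (Or.inr rfl)
          · exact absurd huS h4
        · rintro (rfl | rfl | rfl)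
          · exact ⟨Or.inl rfl, h1⟩
          · exact ⟨Or.inr (Or.inl rfl), h2⟩
          · exact ⟨Or.inr (Or.inr (Or.inl rfl)), h3⟩
      rw [hint, Set.ncard_insert_of_notMem (by simp [h12, h13]) (Set.toFinite _),
        Set.ncard_pair h23]
    have hfiber : ∀ H ∈ B, (A.filter (fun t => g t = H)).card = 6 := by
      intro H hHB
      rw [hB, Set.Finite.mem_toFinset] at hHB
      obtain ⟨hHflat, hH3⟩ := hHB
      obtain ⟨a, b, c, hab, hac, hbc, hABC, hdS, hHeq⟩ := flat_decomp hHflat hH3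
      have haHS : a ∈ H ∩ S := by rw [hABC]; simp
      have hbHS : b ∈ H ∩ S := by rw [hABC]; simp
      have hcHS : c ∈ H ∩ S := by rw [hABC]; simp
      have s1 : a + c + b = a + b + c := by abel
      have s2 : b + a + c = a + b + c := by abel
      have s3 : b + c + a = a + b + c := by abel
      have s4 : c + a + b = a + b + c := by abel
      have s5 : c + b + a = a + b + c := by abel
      have key : A.filter (fun t => g t = H) =
          ({(a, b, c), (a, c, b), (b, a, c), (b, c, a), (c, a, b), (c, b, a)} :
            Finset ((Fin n → ZMod 2) × (Fin n → ZMod 2) × (Fin n → ZMod 2))) := by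
        ext ⟨t1, t2, t3⟩
        rw [Finset.mem_filter, hA, Set.Finite.mem_toFinset]
        constructor
        · rintro ⟨ht', hgt⟩
          obtain ⟨h12, h13, h23⟩ := hdist _ ht'
          obtain ⟨h1, h2, h3, h4⟩ := ht'
          have m1 : t1 ∈ H ∩ S := ⟨by rw [← hgt]; simp [hg], h1⟩
          have m2 : t2 ∈ H ∩ S := ⟨by rw [← hgt]; simp [hg], h2⟩
          have m3 : t3 ∈ H ∩ S := ⟨by rw [← hgt]; simp [hg], h3⟩
          rw [hABC] at m1 m2 m3
          simp only [Set.mem_insert_iff, Set.mem_singleton_iff] at m1 m2 m3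
          simp only [Finset.mem_insert, Finset.mem_singleton, Prod.mk.injEq]
          rcases m1 with rfl | rfl | rfl <;> rcases m2 with rfl | rfl | rfl <;>
            rcases m3 with rfl | rfl | rfl <;>
            first
              | exact absurd rfl h12
              | exact absurd rfl h13
              | exact absurd rfl h23
              | exact Or.inl ⟨rfl, rfl, rfl⟩
              | exact Or.inr (Or.inl ⟨rfl, rfl, rfl⟩)
              | exact Or.inr (Or.inr (Or.inl ⟨rfl, rfl, rfl⟩))
              | exact Or.inr (Or.inr (Or.inr (Or.inl ⟨rfl, rfl, rfl⟩)))
              | exact Or.inr (Or.inr (Or.inr (Or.inr (Or.inl ⟨rfl, rfl, rfl⟩))))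
              | exact Or.inr (Or.inr (Or.inr (Or.inr (Or.inr ⟨rfl, rfl, rfl⟩))))
        · intro ht
          simp only [Finset.mem_insert, Finset.mem_singleton, Prod.mk.injEq] at ht
          rcases ht with ⟨rfl, rfl, rfl⟩ | ⟨rfl, rfl, rfl⟩ | ⟨rfl, rfl, rfl⟩ |
            ⟨rfl, rfl, rfl⟩ | ⟨rfl, rfl, rfl⟩ | ⟨rfl, rfl, rfl⟩ <;>
          (refine ⟨⟨?_, ?_, ?_, ?_⟩, ?_⟩
           · first | exact haHS.2 | exact hbHS.2 | exact hcHS.2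
           · first | exact haHS.2 | exact hbHS.2 | exact hcHS.2
           · first | exact haHS.2 | exact hbHS.2 | exact hcHS.2
           · show t1 + t2 + t3 ∉ S
             (try rw [s1]); (try rw [s2]); (try rw [s3]); (try rw [s4]); (try rw [s5])
             exact hdS
           · show ({t1, t2, t3, t1 + t2 + t3} : Set _) = H
             rw [hHeq]
             (try rw [s1]); (try rw [s2]); (try rw [s3]); (try rw [s4]); (try rw [s5])
             all_goals (ext u; simp only [Set.mem_insert_iff, Set.mem_singleton_iff]; tauto))
      rw [key]
      have n1 : ((a, b, c) : _ × _ × _) ∉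
          ({(a, c, b), (b, a, c), (b, c, a), (c, a, b), (c, b, a)} : Finset _) := by
        simp [Prod.ext_iff, hab, hac, hbc, hab.symm, hac.symm, hbc.symm]
      have n2 : ((a, c, b) : _ × _ × _) ∉
          ({(b, a, c), (b, c, a), (c, a, b), (c, b, a)} : Finset _) := by
        simp [Prod.ext_iff, hab, hac, hbc, hab.symm, hac.symm, hbc.symm]
      have n3 : ((b, a, c) : _ × _ × _) ∉
          ({(b, c, a), (c, a, b), (c, b, a)} : Finset _) := by
        simp [Prod.ext_iff, hab, hac, hbc, hab.symm, hac.symm, hbc.symm]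
      have n4 : ((b, c, a) : _ × _ × _) ∉ ({(c, a, b), (c, b, a)} : Finset _) := by
        simp [Prod.ext_iff, hab, hac, hbc, hab.symm, hac.symm, hbc.symm]
      have n5 : ((c, a, b) : _ × _ × _) ∉ ({(c, b, a)} : Finset _) := by
        simp [Prod.ext_iff, hab, hac, hbc, hab.symm, hac.symm, hbc.symm]
      rw [Finset.card_insert_of_notMem n1, Finset.card_insert_of_notMem n2,
        Finset.card_insert_of_notMem n3, Finset.card_insert_of_notMem n4,
        Finset.card_insert_of_notMem n5, Finset.card_singleton]
    have hAcard : A.card = 6 * B.card := by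
      rw [Finset.card_eq_sum_card_fiberwise hmaps, Finset.sum_congr rfl hfiber,
        Finset.sum_const, smul_eq_mul, mul_comm]
    rw [Set.ncard_eq_toFinset_card T' (Set.toFinite T'),
      Set.ncard_eq_toFinset_card F (Set.toFinite F)]
    exact hAcard
  have hm3 : ((m ^ 3 : ℕ) : ℤ) = (m : ℤ) ^ 3 := by push_cast; ring
  rw [hstep1, ← hm3]
  omega
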